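/- Let Σ be a finite alphabet and let r and s be finite words over Σ that do not commute (rs ≠ sr). Then there exist finite words a, b over Σ such that a is not a prefix of b, b is not a prefix of a, and both r and s lie in {a,b}^*. -/

import Mathlib

/-- The factor of the infinite word `x` of length `n` starting at position `i`. -/
def factorAt {A : Type*} (x : ℕ → A) (i n : ℕ) : List A :=
  (List.range n).map fun j => x (i + j)

/-- `w` is a factor of the infinite word `x`. -/
def IsFactor {A : Type*} (x : ℕ → A) (w : List A) : Prop :=
  ∃ i : ℕ, w = factorAt x i w.length

/-- The `n`-th power of the finite word `w`. -/
def wpow {A : Type*} (w : List A) (n : ℕ) : List A :=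
  (List.replicate n w).flatten

/-- A nonempty finite word is primitive if it is not a proper power. -/
def Primitive {A : Type*} (w : List A) : Prop :=
  w ≠ [] ∧ ∀ (t : List A) (e : ℕ), 2 ≤ e → w ≠ wpow t e

/-- `w` occurs with unbounded exponent in the infinite word `x`. -/
def UnboundedExponent {A : Type*} (x : ℕ → A) (w : List A) : Prop :=
  ∀ n : ℕ, 1 ≤ n → IsFactor x (wpow w n)

/-- `w` belongs to `{a,b}^*`, the submonoid generated by `a` and `b`. -/
def InStarPair {A : Type*} (a b w : List A) : Prop :=
  ∃ l : List (List A), (∀ t ∈ l, t = a ∨ t = b) ∧ w = l.flatten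

/-- `(u, v)` is a minimal pair: there is no pair `(a, b)` of smaller total length
with `u, v ∈ {a,b}^*`. -/
def MinimalPair {A : Type*} (u v : List A) : Prop :=
  ¬ ∃ a b : List A, a.length + b.length < u.length + v.length ∧
      InStarPair a b u ∧ InStarPair a b v

/-- The finite word `w` is a prefix of the infinite word `x`. -/
def WordPrefix {A : Type*} (x : ℕ → A) (w : List A) : Prop :=
  w = factorAt x 0 w.length

/-- The infinite word `x` belongs to `{u,v}^ω`, i.e. `x` is an infinite
concatenation of blocks, each equal to `u` or to `v`. -/
def InOmegaPair {A : Type*} (x : ℕ → A) (u v : List A) : Prop :=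
  ∃ f : ℕ → List A, (∀ n, f n = u ∨ f n = v) ∧
    ∀ n : ℕ, WordPrefix x (((List.range n).map f).flatten)

/-- The morphism `{x,y}^* → Σ^*` sending `x` (encoded `false`) to `u` and
`y` (encoded `true`) to `v`. -/
def sigmaMap {A : Type*} (u v : List A) (w : List Bool) : List A :=
  (w.map fun c => if c then v else u).flatten

/-- The number of occurrences of the factor `xy` (encoded `[false, true]`) in `w`. -/
def countXY (w : List Bool) : ℕ :=
  ((List.range w.length).filter fun i => decide ([false, true] <+: w.drop i)).length

lemma starPair_symm {A : Type*} {a b w : List A} (h : InStarPair a b w) :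
    InStarPair b a w := by
  obtain ⟨l, hl, rfl⟩ := h
  exact ⟨l, fun t ht => (hl t ht).symm, rfl⟩

lemma star_refine {A : Type*} (a c : List A) {w : List A}
    (h : InStarPair a (a ++ c) w) : InStarPair a c w := by
  obtain ⟨l, hl, rfl⟩ := h
  induction l with
  | nil => exact ⟨[], by simp, rfl⟩
  | cons t l ih =>
    obtain ⟨l', hl', hf⟩ := ih (fun t ht => hl t (List.mem_cons_of_mem _ ht))
    rcases hl t List.mem_cons_self with rfl | rfl
    · refine ⟨t :: l', fun u hu => ?_, by simp [hf]⟩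
      rcases List.mem_cons.mp hu with rfl | hu
      exacts [Or.inl rfl, hl' u hu]
    · refine ⟨a :: c :: l', fun u hu => ?_, by simp [hf]⟩
      rcases List.mem_cons.mp hu with rfl | hu
      · exact Or.inl rfl
      rcases List.mem_cons.mp hu with rfl | hu
      exacts [Or.inr rfl, hl' u hu]

lemma star_eps {A : Type*} (c : List A) (l : List (List A))
    (hl : ∀ t ∈ l, t = [] ∨ t = c) :
    ∃ k, l.flatten = (List.replicate k c).flatten := by
  induction l with
  | nil => exact ⟨0, rfl⟩
  | cons t l ih =>
    obtain ⟨k, hk⟩ := ih (fun t ht => hl t (List.mem_cons_of_mem _ ht))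
    rcases hl t List.mem_cons_self with rfl | rfl
    · exact ⟨k, by simp [hk]⟩
    · exact ⟨k + 1, by simp [hk, List.replicate_succ]⟩

lemma pow_comm {A : Type*} (c : List A) (m n : ℕ) :
    (List.replicate m c).flatten ++ (List.replicate n c).flatten =
      (List.replicate n c).flatten ++ (List.replicate m c).flatten := by
  rw [← List.flatten_append, ← List.flatten_append, ← List.replicate_add,
    ← List.replicate_add, Nat.add_comm]

lemma key_lemma {A : Type*} (r s : List A) (h : r ++ s ≠ s ++ r) :
    ∀ n a b, a.length + b.length ≤ n → InStarPair a b r → InStarPair a b s →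
      ∃ a' b' : List A, ¬ a' <+: b' ∧ ¬ b' <+: a' ∧ InStarPair a' b' r ∧
        InStarPair a' b' s := by
  intro n
  induction n using Nat.strong_induction_on with
  | _ n ih =>
    intro a b hn hr hs
    have single : ∀ c : List A, InStarPair c c r → InStarPair c c s → False := by
      intro c hcr hcs
      obtain ⟨l1, hl1, hw1⟩ := hcr
      obtain ⟨l2, hl2, hw2⟩ := hcs
      obtain ⟨m, hm⟩ := star_eps c l1 (fun t ht => Or.inr ((hl1 t ht).elim id id))
      obtain ⟨k, hk⟩ := star_eps c l2 (fun t ht => Or.inr ((hl2 t ht).elim id id))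
      exact h (by rw [hw1, hw2, hm, hk, pow_comm])
    have eps : ∀ c : List A, InStarPair [] c r → InStarPair [] c s → False := by
      intro c hcr hcs
      obtain ⟨l1, hl1, hw1⟩ := hcr
      obtain ⟨l2, hl2, hw2⟩ := hcs
      obtain ⟨m, hm⟩ := star_eps c l1 hl1
      obtain ⟨k, hk⟩ := star_eps c l2 hl2
      exact h (by rw [hw1, hw2, hm, hk, pow_comm])
    have step : ∀ a b : List A, a.length + b.length ≤ n → a <+: b →
        InStarPair a b r → InStarPair a b s →
        ∃ a' b' : List A, ¬ a' <+: b' ∧ ¬ b' <+: a' ∧ InStarPair a' b' r ∧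
          InStarPair a' b' s := by
      intro a b hn hab hr hs
      obtain ⟨c, rfl⟩ := hab
      rcases eq_or_ne c [] with rfl | hc
      · simp only [List.append_nil] at hr hs
        exact absurd (single a hr hs) (fun x => x)
      rcases eq_or_ne a [] with rfl | ha
      · simp only [List.nil_append] at hr hs
        exact absurd (eps c hr hs) (fun x => x)
      have hlt : a.length + c.length < n := by
        have : 0 < a.length := List.length_pos_iff.mpr ha
        simp only [List.length_append] at hn
        omega
      exact ih _ hlt a c le_rfl (star_refine a c hr) (star_refine a c hs)
    by_cases hab : a <+: b
    · exact step a b hn hab hr hs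
    by_cases hba : b <+: a
    · exact step b a (by omega) hba (starPair_symm hr) (starPair_symm hs)
    exact ⟨a, b, hab, hba, hr, hs⟩

/-- If `r` and `s` do not commute, then they lie in `{a,b}^*` for some pair of words
`a`, `b` neither of which is a prefix of the other. -/
theorem noncommuting_in_prefix_free_pair {A : Type*} [Fintype A] (r s : List A)
    (h : r ++ s ≠ s ++ r) :
    ∃ a b : List A, ¬ a <+: b ∧ ¬ b <+: a ∧ InStarPair a b r ∧ InStarPair a b s := by
  exact key_lemma r s h (r.length + s.length) r s le_rfl
    ⟨[r], by simp, by simp⟩ ⟨[s], by simp, by simp⟩
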